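/- For all integers n, k ≥ 1, Σ_{t=k}^{kn} B(t,n,k) = C(n,k), where B(t,n,k) is the number of n-tuples (T₁,…,T_n) of k-element subsets of [t] = {1,…,t} with T₁ ∪ ⋯ ∪ T_n = [t], and C(n,k) is the number of pairs (t, (B₁,…,B_t)) consisting of an integer t ≥ 1 and a t-tuple of nonempty subsets of [n] = {1,…,n} such that every a ∈ [n] belongs to exactly k of the blocks B_j. -/
import Mathlib


/-- `B(t,n,k)`: the number of `n`-tuples `(T₁,…,T_n)` of `k`-element (not necessarily
disjoint) subsets of `[t]` with `T₁ ∪ ⋯ ∪ T_n = [t]`. -/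
def Bcover (t n k : ℕ) : ℕ :=
  (Finset.univ.filter (fun T : Fin n → Finset (Fin t) =>
    (∀ i, (T i).card = k) ∧ Finset.univ.biUnion T = Finset.univ)).card

/-- `C(n,k)`: the number of pairs `(t, (B₁,…,B_t))` consisting of an integer `t ≥ 1` and
a `t`-tuple of nonempty subsets of `[n]` such that every `a ∈ [n]` belongs to exactly
`k` of the blocks (ordered partitions of the multiset `{1^k,…,n^k}` into nonempty
subsets of `[n]`). -/
noncomputable def Ccount (n k : ℕ) : ℕ :=
  Nat.card ((t : ℕ) × {B : Fin t → Finset (Fin n) //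
    1 ≤ t ∧ (∀ j, (B j).Nonempty) ∧
    ∀ a : Fin n, (Finset.univ.filter (fun j => a ∈ B j)).card = k})

def Rt (n k t : ℕ) := {B : Fin t → Finset (Fin n) //
    1 ≤ t ∧ (∀ j, (B j).Nonempty) ∧
    ∀ a : Fin n, (Finset.univ.filter (fun j => a ∈ B j)).card = k}

noncomputable instance (n k t : ℕ) : Fintype (Rt n k t) := by
  unfold Rt; classical infer_instance

def myEquiv (n k t : ℕ) (hn : 1 ≤ n) (hk : 1 ≤ k) :
    {T : Fin n → Finset (Fin t) //
      (∀ i, (T i).card = k) ∧ Finset.univ.biUnion T = Finset.univ} ≃ Rt n k t where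
  toFun := fun T =>
    ⟨fun j => Finset.univ.filter (fun i => j ∈ T.1 i), by
      have hne : (T.1 ⟨0, hn⟩).Nonempty := by
        rw [← Finset.card_pos, T.2.1 ⟨0, hn⟩]; exact hk
      obtain ⟨j, _⟩ := hne
      exact j.pos, by
      intro j
      have : j ∈ Finset.univ.biUnion T.1 := by rw [T.2.2]; exact Finset.mem_univ j
      obtain ⟨i, _, hij⟩ := Finset.mem_biUnion.mp this
      exact ⟨i, Finset.mem_filter.mpr ⟨Finset.mem_univ i, hij⟩⟩, by
      intro a
      have h : (Finset.univ.filter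
          (fun j => a ∈ Finset.univ.filter (fun i => j ∈ T.1 i))) = T.1 a := by
        ext j
        simp
      rw [h, T.2.1 a]⟩
  invFun := fun B =>
    ⟨fun i => Finset.univ.filter (fun j => i ∈ B.1 j), by
      refine ⟨fun i => B.2.2.2 i, ?_⟩
      ext j
      simp only [Finset.mem_biUnion, Finset.mem_filter, Finset.mem_univ, true_and,
        iff_true]
      obtain ⟨a, ha⟩ := B.2.2.1 j
      exact ⟨a, ha⟩⟩
  left_inv := by
    rintro ⟨T, hT⟩
    apply Subtype.ext
    funext i
    ext j
    simp
  right_inv := by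
    rintro ⟨B, hB⟩
    apply Subtype.ext
    funext j
    ext a
    simp

lemma bcover_eq (n k t : ℕ) (hn : 1 ≤ n) (hk : 1 ≤ k) :
    Bcover t n k = Fintype.card (Rt n k t) := by
  classical
  rw [Bcover, ← Fintype.card_subtype]
  exact Fintype.card_congr (myEquiv n k t hn hk)

lemma rt_empty (n k t : ℕ) (hn : 1 ≤ n) (ht : t ∉ Finset.Icc k (k * n)) :
    IsEmpty (Rt n k t) := by
  classical
  constructor
  rintro ⟨B, ht1, hBne, hBk⟩
  apply ht
  rw [Finset.mem_Icc]
  constructor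
  · have := hBk ⟨0, hn⟩
    calc k = (Finset.univ.filter (fun j => (⟨0, hn⟩ : Fin n) ∈ B j)).card := this.symm
    _ ≤ (Finset.univ : Finset (Fin t)).card := Finset.card_filter_le _ _
    _ = t := Finset.card_univ.trans (Fintype.card_fin t)
  · have key : ∑ j : Fin t, (B j).card = n * k := by
      have : ∀ j : Fin t, (B j).card = ∑ a : Fin n, if a ∈ B j then 1 else 0 := by
        intro j
        rw [← Finset.card_filter]
        congr 1
        ext a
        simp
      simp_rw [this]
      rw [Finset.sum_comm]
      have : ∀ a : Fin n, (∑ j : Fin t, if a ∈ B j then 1 else 0) = k := by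
        intro a
        rw [← Finset.card_filter]
        exact hBk a
      simp_rw [this]
      simp [Finset.card_univ, mul_comm]
    calc t = ∑ _j : Fin t, 1 := by simp
    _ ≤ ∑ j : Fin t, (B j).card := by
        apply Finset.sum_le_sum
        intro j _
        exact Finset.card_pos.mpr (hBne j)
    _ = n * k := key
    _ = k * n := mul_comm n k

/-- For `n, k ≥ 1`, `Σ_{t=k}^{kn} B(t,n,k) = C(n,k)`. -/
theorem stmt19 (n k : ℕ) (hn : 1 ≤ n) (hk : 1 ≤ k) :
    ∑ t ∈ Finset.Icc k (k * n), Bcover t n k = Ccount n k := by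
  classical
  have e2 : ((t : ℕ) × Rt n k t) ≃ ((t : (Finset.Icc k (k * n) : Finset ℕ)) × Rt n k t.val) :=
    { toFun := fun ⟨t, r⟩ => ⟨⟨t, by
        by_contra h
        exact (rt_empty n k t hn h).false r⟩, r⟩
      invFun := fun ⟨t, r⟩ => ⟨t.val, r⟩
      left_inv := fun ⟨t, r⟩ => rfl
      right_inv := fun ⟨t, r⟩ => rfl }
  have : Ccount n k = Nat.card ((t : ℕ) × Rt n k t) := rfl
  rw [this, Nat.card_congr e2, Nat.card_eq_fintype_card, Fintype.card_sigma]
  rw [← Finset.sum_attach (Finset.Icc k (k * n)) (fun t => Bcover t n k)]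
  rw [Finset.sum_coe_sort (Finset.Icc k (k*n)) (fun t => Fintype.card (Rt n k t))]
  rw [← Finset.sum_attach (Finset.Icc k (k * n)) (fun t => Fintype.card (Rt n k t))]
  apply Finset.sum_congr rfl
  intro t _
  exact bcover_eq n k t.val hn hk
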